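/- Lifting step: Let A₁,…,A_{d+1} lie strictly on one side of a hyperplane α in ℝ^d and A_{d+2} strictly on the other side, with A′_i the intersection of segment A_{d+2}A_i with α. If I′ ⊔ J′ is a partition of {1,…,d+1} such that the convex hulls of {A′_i : i ∈ I′} and {A′_j : j ∈ J′} intersect at a point Y′, then the ray from A_{d+2} through Y′ meets both the convex hull of {A_i : i ∈ I′} and the convex hull of {A_j : j ∈ J′}. -/
import Mathlib

lemma lifting_aux {d : ℕ} (A A' : Fin (d + 1) → (Fin d → ℝ)) (P : Fin d → ℝ)
    (s : Fin (d + 1) → ℝ) (hspos : ∀ i, 0 < s i)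
    (hAs : ∀ i, A' i = P + s i • (A i - P))
    (S : Set (Fin (d + 1))) (Y' : Fin d → ℝ)
    (hY : Y' ∈ convexHull ℝ (A' '' S)) :
    ∃ t : ℝ, 0 ≤ t ∧ P + t • (Y' - P) ∈ convexHull ℝ (A '' S) := by
  rw [convexHull_eq] at hY
  obtain ⟨ι, t, w, z, hw0, hw1, hzS, hcm⟩ := hY
  have h' : ∀ i : ι, ∃ k : Fin (d + 1), i ∈ t → (k ∈ S ∧ A' k = z i) := by
    intro i
    by_cases hi : i ∈ t
    · obtain ⟨k, hk, hk2⟩ := hzS i hi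
      exact ⟨k, fun _ => ⟨hk, hk2⟩⟩
    · exact ⟨0, fun h => absurd h hi⟩
  choose j hj using h'
  set w' : ι → ℝ := fun i => w i * s (j i) with hw'def
  set c : ℝ := ∑ i ∈ t, w' i with hc
  have hw'0 : ∀ i ∈ t, 0 ≤ w' i := fun i hi => mul_nonneg (hw0 i hi) (hspos _).le
  have hex : ∃ i ∈ t, 0 < w i := by
    by_contra hcon
    push_neg at hcon
    have : ∑ i ∈ t, w i = 0 :=
      Finset.sum_eq_zero fun i hi => le_antisymm (hcon i hi) (hw0 i hi)
    rw [this] at hw1; norm_num at hw1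
  obtain ⟨i0, hi0, hwi0⟩ := hex
  have hcpos : 0 < c :=
    Finset.sum_pos' hw'0 ⟨i0, hi0, mul_pos hwi0 (hspos _)⟩
  -- Y' as a sum
  have hYsum : Y' = ∑ i ∈ t, w i • z i := by
    rw [← hcm, Finset.centerMass_eq_of_sum_1 _ _ hw1]
  have hzeq : ∀ i ∈ t, z i = P + s (j i) • (A (j i) - P) := by
    intro i hi
    rw [← (hj i hi).2, hAs]
  have hYP : Y' - P = ∑ i ∈ t, w' i • (A (j i) - P) := by
    calc Y' - P = (∑ i ∈ t, w i • z i) - (∑ i ∈ t, w i) • P := by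
          rw [← hYsum, hw1, one_smul]
      _ = ∑ i ∈ t, (w i • z i - w i • P) := by
          rw [Finset.sum_smul, Finset.sum_sub_distrib]
      _ = ∑ i ∈ t, w' i • (A (j i) - P) := by
          refine Finset.sum_congr rfl fun i hi => ?_
          rw [hzeq i hi, hw'def, mul_smul, ← smul_sub]
          congr 1
          abel
  have hkey : ∑ i ∈ t, w' i • A (j i) = (Y' - P) + c • P := by
    rw [hYP, hc, Finset.sum_smul, ← Finset.sum_add_distrib]
    refine Finset.sum_congr rfl fun i hi => ?_
    rw [smul_sub]; abel
  refine ⟨c⁻¹, inv_nonneg.2 hcpos.le, ?_⟩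
  have hmem : t.centerMass w' (fun i => A (j i)) ∈ convexHull ℝ (A '' S) := by
    refine Finset.centerMass_mem_convexHull t hw'0 hcpos fun i hi => ?_
    exact ⟨j i, (hj i hi).1, rfl⟩
  have heq : P + c⁻¹ • (Y' - P) = t.centerMass w' (fun i => A (j i)) := by
    rw [Finset.centerMass, ← hc, hkey, smul_add, smul_smul,
      inv_mul_cancel₀ hcpos.ne', one_smul]
    abel
  rw [heq]; exact hmem

theorem lifting_step (d : ℕ)
    (A : Fin (d + 1) → (Fin d → ℝ)) (P : Fin d → ℝ)
    (f : (Fin d → ℝ) →ᵃ[ℝ] ℝ)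
    (hP : f P < 0) (hA : ∀ i, 0 < f (A i))
    (A' : Fin (d + 1) → (Fin d → ℝ))
    (hA' : ∀ i, A' i ∈ segment ℝ P (A i) ∧ f (A' i) = 0)
    (I' J' : Set (Fin (d + 1))) (hdisj : I' ∩ J' = ∅) (hunion : I' ∪ J' = Set.univ)
    (Y' : Fin d → ℝ)
    (hY' : Y' ∈ convexHull ℝ (A' '' I') ∩ convexHull ℝ (A' '' J')) :
    (∃ t : ℝ, 0 ≤ t ∧ P + t • (Y' - P) ∈ convexHull ℝ (A '' I')) ∧
    (∃ t : ℝ, 0 ≤ t ∧ P + t • (Y' - P) ∈ convexHull ℝ (A '' J')) := by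
  have hs : ∀ i, ∃ sv : ℝ, 0 < sv ∧ A' i = P + sv • (A i - P) := by
    intro i
    obtain ⟨⟨a, b, ha, hb, hab, habP⟩, hf⟩ := hA' i
    have hab' : a = 1 - b := by linarith
    refine ⟨b, ?_, ?_⟩
    · rcases hb.lt_or_eq with h | h
      · exact h
      · exfalso
        have : A' i = P := by
          rw [← habP, ← h, zero_smul, add_zero, hab', ← h, sub_zero, one_smul]
        rw [this] at hf
        linarith
    · rw [← habP, hab']
      funext x
      simp [sub_smul, smul_sub]
      ring
  choose s hspos hAs using hs
  exact ⟨lifting_aux A A' P s hspos hAs I' Y' hY'.1,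
    lifting_aux A A' P s hspos hAs J' Y' hY'.2⟩
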